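/- For every positive integer n, there exists a weakly 3-suitable family of permutations of [n] of cardinality at most ⌈log₂ log₂ n⌉ + 1 (for n ≥ 3; for n ≤ 2 a single permutation suffices). -/

import Mathlib

namespace W3S

/-- encode the first `L` bits given by `f` as a natural number -/
def enc (f : ℕ → Bool) : ℕ → ℕ
  | 0 => 0
  | (L+1) => 2 ^ L * (if f L then 1 else 0) + enc f L

lemma enc_lt (f : ℕ → Bool) : ∀ L, enc f L < 2 ^ L
  | 0 => by simp [enc]
  | (L+1) => by
      have h := enc_lt f L
      have h2 : (2:ℕ) ^ (L+1) = 2 ^ L * 2 := by ring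
      simp only [enc, h2]
      split <;> omega

lemma testBit_enc (f : ℕ → Bool) : ∀ L q, (enc f L).testBit q = (decide (q < L) && f q)
  | 0, q => by simp [enc]
  | (L+1), q => by
      rw [enc, Nat.testBit_two_pow_mul_add _ (enc_lt f L)]
      by_cases hq : q < L
      · rw [if_pos hq, testBit_enc f L q]
        simp [hq, Nat.lt_succ_of_lt hq]
      · rw [if_neg hq]
        by_cases hq' : q = L
        · rw [hq']
          have hLL : L - L = 0 := by omega
          rw [hLL]
          cases hfL : f L <;> simp [Nat.testBit_zero]
        · have h1 : ¬ q < L + 1 := by omega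
          have h2 : 1 ≤ q - L := by omega
          simp only [h1, decide_eq_false (by omega : ¬ q < L + 1), Bool.false_and]
          cases hfL : f L
          · simp [Nat.zero_testBit]
          · simp only [if_pos rfl]
            exact Nat.testBit_lt_two_pow (by calc (1:ℕ) < 2^1 := by norm_num
              _ ≤ 2 ^ (q - L) := Nat.pow_le_pow_right (by norm_num) h2)

/-- masked key -/
def keyF (L : ℕ) (μ : ℕ → Bool) (x : ℕ) : ℕ := enc (fun p => xor (x.testBit p) (μ p)) L

lemma testBit_keyF (L : ℕ) (μ : ℕ → Bool) (x q : ℕ) :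
    (keyF L μ x).testBit q = (decide (q < L) && xor (x.testBit q) (μ q)) :=
  testBit_enc _ L q

lemma keyF_inj {L : ℕ} (μ : ℕ → Bool) {x y : ℕ} (hx : x < 2 ^ L) (hy : y < 2 ^ L)
    (h : keyF L μ x = keyF L μ y) : x = y := by
  apply Nat.eq_of_testBit_eq
  intro q
  by_cases hq : q < L
  · have h' := congrArg (Nat.testBit · q) h
    simp [testBit_keyF, hq] at h'
    revert h'
    cases x.testBit q <;> cases y.testBit q <;> cases μ q <;> simp
  · have hq' : (2:ℕ) ^ L ≤ 2 ^ q := Nat.pow_le_pow_right (by norm_num) (by omega)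
    rw [Nat.testBit_lt_two_pow (lt_of_lt_of_le hx hq'),
        Nat.testBit_lt_two_pow (lt_of_lt_of_le hy hq')]

lemma keyF_false {L : ℕ} {x : ℕ} (hx : x < 2 ^ L) : keyF L (fun _ => false) x = x := by
  apply Nat.eq_of_testBit_eq
  intro q
  rw [testBit_keyF]
  by_cases hq : q < L
  · simp [hq]
  · have hq' : (2:ℕ) ^ L ≤ 2 ^ q := Nat.pow_le_pow_right (by norm_num) (by omega)
    simp [hq, Nat.testBit_lt_two_pow (lt_of_lt_of_le hx hq')]

lemma exists_witness {x y : ℕ} (h : x < y) :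
    ∃ p, x.testBit p = false ∧ y.testBit p = true ∧ ∀ j, p < j → x.testBit j = y.testBit j := by
  have hxy : x ^^^ y ≠ 0 := fun h' => (Nat.ne_of_lt h) (xor_eq_zero_iff.mp h')
  obtain ⟨p, hp, hp'⟩ := Nat.exists_most_significant_bit hxy
  have hagree : ∀ j, p < j → x.testBit j = y.testBit j := by
    intro j hj
    have := hp' j hj
    simp only [Nat.testBit_xor] at this
    revert this; cases x.testBit j <;> cases y.testBit j <;> simp
  have hdiff : x.testBit p ≠ y.testBit p := by
    simp only [Nat.testBit_xor] at hp
    revert hp; cases x.testBit p <;> cases y.testBit p <;> simp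
  cases hx : x.testBit p with
  | false =>
    cases hy : y.testBit p with
    | false => exact absurd (hx.trans hy.symm) hdiff
    | true => exact ⟨p, hx, hy, hagree⟩
  | true =>
    cases hy : y.testBit p with
    | false =>
      have : y < x := Nat.lt_of_testBit p hy hx (fun j hj => (hagree j hj).symm)
      omega
    | true => exact absurd (hx.trans hy.symm) hdiff

lemma keyF_lt {L : ℕ} {μ : ℕ → Bool} {x y p : ℕ} (hp : p < L)
    (hkx : xor (x.testBit p) (μ p) = false) (hky : xor (y.testBit p) (μ p) = true)
    (hagree : ∀ j, p < j → x.testBit j = y.testBit j) : keyF L μ x < keyF L μ y := by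
  apply Nat.lt_of_testBit p
  · rw [testBit_keyF]; simp [hp, hkx]
  · rw [testBit_keyF]; simp [hp, hky]
  · intro j hj
    rw [testBit_keyF, testBit_keyF, hagree j hj]


/-- the mask for the `i`-th order -/
def mask (m : ℕ) (i : Fin (m+1)) : ℕ → Bool :=
  fun p => if i.val = 0 then false else p.testBit (i.val - 1)

lemma mask_zero (m : ℕ) : mask m 0 = fun _ => false := by
  funext p; simp [mask]

lemma mask_succ (m i : ℕ) (h : i + 1 < m + 1) :
    mask m ⟨i+1, h⟩ = fun p => p.testBit i := by
  funext p; simp [mask]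

/-- the family of orders -/
def fam (n L m : ℕ) : Fin (m+1) → Fin n → Fin n → Prop :=
  fun i x y => keyF L (mask m i) x.val < keyF L (mask m i) y.val

end W3S

/-- A family of strict orders is *3-suitable* if for every three distinct elements
`a b c` and distinguished element `a`, some order places `a` after both `b` and `c`. -/
def Fam3Suitable {X ι : Type*} (S : ι → X → X → Prop) : Prop :=
  ∀ a b c : X, a ≠ b → a ≠ c → b ≠ c → ∃ i, S i b a ∧ S i c a

/-- A family of strict orders is *weakly 3-suitable* if for every three distinct elements
`a b c` and distinguished element `a`, some order places `a` after both `b` and `c`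
or before both `b` and `c`. -/
def FamWeakly3Suitable {X ι : Type*} (S : ι → X → X → Prop) : Prop :=
  ∀ a b c : X, a ≠ b → a ≠ c → b ≠ c →
    ∃ i, (S i b a ∧ S i c a) ∨ (S i a b ∧ S i a c)

/-- Minimum cardinality of a weakly 3-suitable family of permutations of `[n]`. -/
noncomputable def permOmega (n : ℕ) : ℕ :=
  sInf {k | ∃ S : Fin k → Fin n → Fin n → Prop,
    (∀ i, IsStrictTotalOrder (Fin n) (S i)) ∧ FamWeakly3Suitable S}

/-- Minimum cardinality of a 3-suitable family of permutations of `[n]`. -/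
noncomputable def permAlpha (n : ℕ) : ℕ :=
  sInf {k | ∃ S : Fin k → Fin n → Fin n → Prop,
    (∀ i, IsStrictTotalOrder (Fin n) (S i)) ∧ Fam3Suitable S}

/-- For every `n ≥ 3` there is a weakly 3-suitable family of permutations
(strict total orders) of `[n]` of cardinality at most `⌈log₂ log₂ n⌉ + 1`; for `1 ≤ n ≤ 2`
a single permutation suffices. -/
theorem weakly_3suitable_family_exists :
    (∀ n : ℕ, 3 ≤ n → ∃ k, k ≤ Nat.clog 2 (Nat.clog 2 n) + 1 ∧
      ∃ S : Fin k → Fin n → Fin n → Prop,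
        (∀ i, IsStrictTotalOrder (Fin n) (S i)) ∧ FamWeakly3Suitable S) ∧
    (∀ n : ℕ, 1 ≤ n → n ≤ 2 → ∃ S : Fin 1 → Fin n → Fin n → Prop,
        (∀ i, IsStrictTotalOrder (Fin n) (S i)) ∧ FamWeakly3Suitable S) := by
  constructor
  · intro n hn
    set L := Nat.clog 2 n with hLdef
    set m := Nat.clog 2 L with hmdef
    have hnL : n ≤ 2 ^ L := Nat.le_pow_clog one_lt_two n
    have hLm : L ≤ 2 ^ m := Nat.le_pow_clog one_lt_two L
    have hxlt : ∀ x : Fin n, x.val < 2 ^ L := fun x => lt_of_lt_of_le x.isLt hnL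
    refine ⟨m + 1, le_refl _, W3S.fam n L m, ?_, ?_⟩
    · intro i
      have hinj : ∀ x y : Fin n,
          W3S.keyF L (W3S.mask m i) x.val = W3S.keyF L (W3S.mask m i) y.val → x = y :=
        fun x y h => Fin.ext (W3S.keyF_inj _ (hxlt x) (hxlt y) h)
      exact { trichotomous := fun x y hxy hyx => by
                rcases lt_trichotomy (W3S.keyF L (W3S.mask m i) x.val)
                  (W3S.keyF L (W3S.mask m i) y.val) with h | h | h
                · exact absurd h hxy
                · exact hinj x y h
                · exact absurd h hyx
              irrefl := fun x => lt_irrefl _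
              trans := fun x y z h1 h2 => lt_trans h1 h2 }
    · have hS0 : ∀ x y : Fin n, x.val < y.val → W3S.fam n L m 0 x y := by
        intro x y h
        show W3S.keyF L (W3S.mask m 0) x.val < W3S.keyF L (W3S.mask m 0) y.val
        rw [W3S.mask_zero, W3S.keyF_false (hxlt x), W3S.keyF_false (hxlt y)]
        exact h
      have middle : ∀ x y z : Fin n, x.val < y.val → y.val < z.val →
          ∃ i, (W3S.fam n L m i x y ∧ W3S.fam n L m i z y) ∨
               (W3S.fam n L m i y x ∧ W3S.fam n L m i y z) := by
        intro x y z hxy hyz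
        obtain ⟨p, hxp, hyp, hagxy⟩ := W3S.exists_witness hxy
        obtain ⟨q, hyq, hzq, hagyz⟩ := W3S.exists_witness hyz
        have hpL : p < L := by
          by_contra hc
          have h1 : (2:ℕ) ^ L ≤ 2 ^ p := Nat.pow_le_pow_right (by norm_num) (by omega)
          have h2 := Nat.ge_two_pow_of_testBit hyp
          have h3 := hxlt y
          omega
        have hqL : q < L := by
          by_contra hc
          have h1 : (2:ℕ) ^ L ≤ 2 ^ q := Nat.pow_le_pow_right (by norm_num) (by omega)
          have h2 := Nat.ge_two_pow_of_testBit hzq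
          have h3 := hxlt z
          omega
        have hpq : p ≠ q := by
          intro h
          rw [h, hyq] at hyp
          exact Bool.false_ne_true hyp
        obtain ⟨i, hi, hi'⟩ := Nat.exists_most_significant_bit (fun h' => hpq (xor_eq_zero_iff.mp h'))
        have hdiff : p.testBit i ≠ q.testBit i := by
          simp only [Nat.testBit_xor] at hi
          revert hi; cases p.testBit i <;> cases q.testBit i <;> simp
        have him : i < m := by
          by_contra hc
          have h2 : (2:ℕ) ^ m ≤ 2 ^ i := Nat.pow_le_pow_right (by norm_num) (by omega)
          have hp' : p.testBit i = false := Nat.testBit_lt_two_pow (by omega)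
          have hq' : q.testBit i = false := Nat.testBit_lt_two_pow (by omega)
          exact hdiff (hp'.trans hq'.symm)
        have hik : i + 1 < m + 1 := by omega
        refine ⟨⟨i + 1, hik⟩, ?_⟩
        have hmask := W3S.mask_succ m i hik
        cases hb : p.testBit i with
        | true =>
          have hqb : q.testBit i = false := by
            revert hdiff; rw [hb]; cases q.testBit i <;> simp
          refine Or.inr ⟨?_, ?_⟩
          · show W3S.keyF L (W3S.mask m ⟨i+1, hik⟩) y.val <
              W3S.keyF L (W3S.mask m ⟨i+1, hik⟩) x.val
            rw [hmask]
            exact W3S.keyF_lt hpL (by rw [hyp, hb]; rfl) (by rw [hxp, hb]; rfl)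
              (fun j hj => (hagxy j hj).symm)
          · show W3S.keyF L (W3S.mask m ⟨i+1, hik⟩) y.val <
              W3S.keyF L (W3S.mask m ⟨i+1, hik⟩) z.val
            rw [hmask]
            exact W3S.keyF_lt hqL (by rw [hyq, hqb]; rfl) (by rw [hzq, hqb]; rfl) hagyz
        | false =>
          have hqb : q.testBit i = true := by
            revert hdiff; rw [hb]; cases q.testBit i <;> simp
          refine Or.inl ⟨?_, ?_⟩
          · show W3S.keyF L (W3S.mask m ⟨i+1, hik⟩) x.val <
              W3S.keyF L (W3S.mask m ⟨i+1, hik⟩) y.val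
            rw [hmask]
            exact W3S.keyF_lt hpL (by rw [hxp, hb]; rfl) (by rw [hyp, hb]; rfl) hagxy
          · show W3S.keyF L (W3S.mask m ⟨i+1, hik⟩) z.val <
              W3S.keyF L (W3S.mask m ⟨i+1, hik⟩) y.val
            rw [hmask]
            exact W3S.keyF_lt hqL (by rw [hzq, hqb]; rfl) (by rw [hyq, hqb]; rfl)
              (fun j hj => (hagyz j hj).symm)
      intro a b c hab hac hbc
      have hab' : a.val ≠ b.val := fun h => hab (Fin.ext h)
      have hac' : a.val ≠ c.val := fun h => hac (Fin.ext h)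
      have hbc' : b.val ≠ c.val := fun h => hbc (Fin.ext h)
      rcases lt_trichotomy a.val b.val with h1 | h1 | h1
      · rcases lt_trichotomy a.val c.val with h2 | h2 | h2
        · exact ⟨0, Or.inr ⟨hS0 a b h1, hS0 a c h2⟩⟩
        · exact absurd h2 hac'
        · -- c < a < b
          obtain ⟨i, hmid⟩ := middle c a b h2 h1
          rcases hmid with ⟨u, v⟩ | ⟨u, v⟩
          · exact ⟨i, Or.inl ⟨v, u⟩⟩
          · exact ⟨i, Or.inr ⟨v, u⟩⟩
      · exact absurd h1 hab'
      · rcases lt_trichotomy a.val c.val with h2 | h2 | h2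
        · -- b < a < c
          obtain ⟨i, hmid⟩ := middle b a c h1 h2
          rcases hmid with ⟨u, v⟩ | ⟨u, v⟩
          · exact ⟨i, Or.inl ⟨u, v⟩⟩
          · exact ⟨i, Or.inr ⟨u, v⟩⟩
        · exact absurd h2 hac'
        · exact ⟨0, Or.inl ⟨hS0 b a h1, hS0 c a h2⟩⟩

  · intro n h1 h2
    refine ⟨fun _ x y => x < y, fun i => inferInstance, ?_⟩
    intro a b c hab hac hbc
    exfalso
    have hcard : ({a, b, c} : Finset (Fin n)).card = 3 := by
      rw [Finset.card_insert_of_notMem (by simp [hab, hac]),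
          Finset.card_insert_of_notMem (by simp [hbc]), Finset.card_singleton]
    have hle : ({a, b, c} : Finset (Fin n)).card ≤ Fintype.card (Fin n) :=
      Finset.card_le_univ _
    rw [hcard, Fintype.card_fin] at hle
    omega
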